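/- arXiv:1711.10111 — 4 statements merged into one kernel-verified Lean document; each statement's English description precedes it below -/
import Mathlib

section
/- Let r ≥ 2 and let c_1, …, c_r ∈ (0,1) with an index m such that c_m > c_i for all i ≠ m. For each i let S_i : ℕ → ℝ be a sequence of positive reals with S_i(n) → ∞, and let f_{i,n}(x) = x^{c_i S_i(n)} (1−x)^{(1−c_i) S_i(n)} / B(c_i S_i(n)+1, (1−c_i) S_i(n)+1) be the density of Beta(c_i S_i(n)+1, (1−c_i) S_i(n)+1). Then lim_{n→∞} ∫_0^1 f_{m,n}(x) ∏_{i≠m} ( ∫_0^x f_{i,n}(t) dt ) dx = 1. (Lemma 2: the probability that the Beta-distributed estimate of the action with maximal reward probability exceeds all other estimates tends to 1 as all observation counts tend to infinity.) -/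
open MeasureTheory Real Filter Set

/-- The Beta function `B(a,b) = ∫₀¹ t^(a-1) (1-t)^(b-1) dt`. -/
noncomputable def betaFn (a b : ℝ) : ℝ :=
  ∫ t in (0:ℝ)..1, t ^ (a - 1) * (1 - t) ^ (b - 1)

/-- The Beta(a,b) probability density on `[0,1]`. -/
noncomputable def betaPdf (a b : ℝ) (x : ℝ) : ℝ :=
  x ^ (a - 1) * (1 - x) ^ (b - 1) / betaFn a b

/-- Continuity of `x ↦ x ^ p` for positive real `p`. -/
lemma contRpowConst {p : ℝ} (hp : 0 < p) : Continuous fun x : ℝ => x ^ p :=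
  continuous_iff_continuousAt.mpr fun x => Real.continuousAt_rpow_const x p (Or.inr hp.le)

/-- Key AM–GM bound: `g c v ≤ g c u * φ` where `g c x = x^c (1-x)^(1-c)` and
`φ = c (v/u) + (1-c) ((1-v)/(1-u))`. -/
lemma gmb {c u v : ℝ} (hc0 : 0 < c) (hc1 : c < 1) (hu0 : 0 < u) (hu1 : u < 1)
    (hv0 : 0 ≤ v) (hv1 : v ≤ 1) :
    v ^ c * (1 - v) ^ (1 - c) ≤
      (u ^ c * (1 - u) ^ (1 - c)) * (c * (v / u) + (1 - c) * ((1 - v) / (1 - u))) := by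
  have hvu : (0:ℝ) ≤ v / u := div_nonneg hv0 hu0.le
  have hvu' : (0:ℝ) ≤ (1 - v) / (1 - u) := div_nonneg (by linarith) (by linarith)
  have key := Real.geom_mean_le_arith_mean2_weighted hc0.le (by linarith : (0:ℝ) ≤ 1 - c)
    hvu hvu' (by ring)
  have h1 : v ^ c = u ^ c * (v / u) ^ c := by
    rw [← Real.mul_rpow hu0.le hvu, mul_div_cancel₀ _ hu0.ne']
  have h2 : (1 - v) ^ (1 - c) = (1 - u) ^ (1 - c) * ((1 - v) / (1 - u)) ^ (1 - c) := by
    rw [← Real.mul_rpow (by linarith) hvu', mul_div_cancel₀ _ (by linarith : (1:ℝ) - u ≠ 0)]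
  calc v ^ c * (1 - v) ^ (1 - c)
      = (u ^ c * (1 - u) ^ (1 - c)) * ((v / u) ^ c * ((1 - v) / (1 - u)) ^ (1 - c)) := by
        rw [h1, h2]; ring
    _ ≤ (u ^ c * (1 - u) ^ (1 - c)) * (c * (v / u) + (1 - c) * ((1 - v) / (1 - u))) := by
        apply mul_le_mul_of_nonneg_left key
        exact mul_nonneg (Real.rpow_nonneg hu0.le _) (Real.rpow_nonneg (by linarith) _)

lemma phi_sub_one {c u v : ℝ} (hu0 : u ≠ 0) (hu1 : u ≠ 1) :
    c * (v / u) + (1 - c) * ((1 - v) / (1 - u)) - 1 = (v - u) * (c - u) / (u * (1 - u)) := by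
  have hu1' : (1:ℝ) - u ≠ 0 := sub_ne_zero.mpr (Ne.symm hu1)
  field_simp
  ring

/-- `g c` is antitone to the right of `c`. -/
lemma g_anti_right {c u v : ℝ} (hc0 : 0 < c) (hc1 : c < 1) (hcu : c ≤ u) (huv : u ≤ v)
    (hu1 : u < 1) (hv1 : v ≤ 1) :
    v ^ c * (1 - v) ^ (1 - c) ≤ u ^ c * (1 - u) ^ (1 - c) := by
  have hu0 : 0 < u := lt_of_lt_of_le hc0 hcu
  have hφ : c * (v / u) + (1 - c) * ((1 - v) / (1 - u)) ≤ 1 := by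
    have h := phi_sub_one (c := c) (u := u) (v := v) hu0.ne' hu1.ne
    have hnum : (v - u) * (c - u) ≤ 0 :=
      mul_nonpos_of_nonneg_of_nonpos (by linarith) (by linarith)
    have : (v - u) * (c - u) / (u * (1 - u)) ≤ 0 :=
      div_nonpos_of_nonpos_of_nonneg hnum (mul_nonneg hu0.le (by linarith))
    linarith
  calc v ^ c * (1 - v) ^ (1 - c)
      ≤ (u ^ c * (1 - u) ^ (1 - c)) * (c * (v / u) + (1 - c) * ((1 - v) / (1 - u))) :=
        gmb hc0 hc1 hu0 hu1 (by linarith) hv1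
    _ ≤ (u ^ c * (1 - u) ^ (1 - c)) * 1 := by
        apply mul_le_mul_of_nonneg_left hφ
        exact mul_nonneg (Real.rpow_nonneg hu0.le _) (Real.rpow_nonneg (by linarith) _)
    _ = u ^ c * (1 - u) ^ (1 - c) := mul_one _

lemma integrand_cont {c s : ℝ} (hc0 : 0 < c) (hc1 : c < 1) (hs : 0 < s) :
    Continuous fun x : ℝ => x ^ (c * s) * (1 - x) ^ ((1 - c) * s) :=
  (contRpowConst (mul_pos hc0 hs)).mul
    ((contRpowConst (mul_pos (by linarith) hs)).comp (continuous_const.sub continuous_id))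

lemma betaFn_eq (c s : ℝ) :
    betaFn (c * s + 1) ((1 - c) * s + 1) = ∫ x in (0:ℝ)..1, x ^ (c * s) * (1 - x) ^ ((1 - c) * s) := by
  unfold betaFn; simp only [add_sub_cancel_right]

lemma g_pow_eq {c s x : ℝ} (hx0 : 0 ≤ x) (hx1 : x ≤ 1) :
    (x ^ c * (1 - x) ^ (1 - c)) ^ s = x ^ (c * s) * (1 - x) ^ ((1 - c) * s) := by
  rw [Real.mul_rpow (Real.rpow_nonneg hx0 _) (Real.rpow_nonneg (by linarith) _),
    ← Real.rpow_mul hx0, ← Real.rpow_mul (by linarith)]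

lemma betaFn_lower {c θ s : ℝ} (hc0 : 0 < c) (hc1 : c < 1) (hθ1 : θ < 1) (hcθ : c < θ)
    (hs : 0 < s) :
    ((c + θ) / 2 - c) * (((c + θ) / 2) ^ c * (1 - (c + θ) / 2) ^ (1 - c)) ^ s ≤
      betaFn (c * s + 1) ((1 - c) * s + 1) := by
  set u : ℝ := (c + θ) / 2 with hu
  have hu0 : 0 < u := by rw [hu]; linarith
  have hu1 : u < 1 := by rw [hu]; linarith
  have hcu : c < u := by rw [hu]; linarith
  have hint := (integrand_cont hc0 hc1 hs).intervalIntegrable (μ := volume)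
  have hnn : ∀ x : ℝ, 0 ≤ x → x ≤ 1 → 0 ≤ x ^ (c * s) * (1 - x) ^ ((1 - c) * s) := fun x hx0 hx1 =>
    mul_nonneg (Real.rpow_nonneg hx0 _) (Real.rpow_nonneg (by linarith) _)
  rw [betaFn_eq]
  have split1 : ∫ x in (0:ℝ)..1, x ^ (c*s) * (1-x) ^ ((1-c)*s)
      = (∫ x in (0:ℝ)..u, x ^ (c*s) * (1-x) ^ ((1-c)*s))
        + ∫ x in u..1, x ^ (c*s) * (1-x) ^ ((1-c)*s) :=
    (intervalIntegral.integral_add_adjacent_intervals (hint 0 u) (hint u 1)).symm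
  have split2 : ∫ x in (0:ℝ)..u, x ^ (c*s) * (1-x) ^ ((1-c)*s)
      = (∫ x in (0:ℝ)..c, x ^ (c*s) * (1-x) ^ ((1-c)*s))
        + ∫ x in c..u, x ^ (c*s) * (1-x) ^ ((1-c)*s) :=
    (intervalIntegral.integral_add_adjacent_intervals (hint 0 c) (hint c u)).symm
  have h1 : 0 ≤ ∫ x in u..1, x ^ (c*s) * (1-x) ^ ((1-c)*s) :=
    intervalIntegral.integral_nonneg hu1.le fun x hx => hnn x (by linarith [hx.1]) hx.2
  have h2 : 0 ≤ ∫ x in (0:ℝ)..c, x ^ (c*s) * (1-x) ^ ((1-c)*s) :=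
    intervalIntegral.integral_nonneg hc0.le fun x hx => hnn x hx.1 (by linarith [hx.2])
  have h3 : (u - c) * (u ^ c * (1 - u) ^ (1 - c)) ^ s
      ≤ ∫ x in c..u, x ^ (c*s) * (1-x) ^ ((1-c)*s) := by
    have := intervalIntegral.integral_mono_on (μ := volume) hcu.le
      (intervalIntegrable_const) (hint c u)
      (f := fun _ : ℝ => (u ^ c * (1 - u) ^ (1 - c)) ^ s)
      (fun x hx => by
        have hx0 : 0 < x := lt_of_lt_of_le hc0 hx.1
        have hx1 : x < 1 := lt_of_le_of_lt hx.2 hu1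
        rw [← g_pow_eq hx0.le hx1.le]
        exact Real.rpow_le_rpow
          (mul_nonneg (Real.rpow_nonneg hu0.le _) (Real.rpow_nonneg (by linarith) _))
          (g_anti_right hc0 hc1 hx.1 hx.2 hx1 hu1.le) hs.le)
    simpa [intervalIntegral.integral_const, smul_eq_mul] using this
  linarith

lemma betaFn_pos' {c s : ℝ} (hc0 : 0 < c) (hc1 : c < 1) (hs : 0 < s) :
    0 < betaFn (c * s + 1) ((1 - c) * s + 1) := by
  rw [betaFn_eq]
  apply intervalIntegral.intervalIntegral_pos_of_pos_on
    ((integrand_cont hc0 hc1 hs).intervalIntegrable 0 1)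
  · intro x hx
    exact mul_pos (Real.rpow_pos_of_pos hx.1 _) (Real.rpow_pos_of_pos (by linarith [hx.2]) _)
  · norm_num

lemma pdf_nonneg' {c s : ℝ} (hc0 : 0 < c) (hc1 : c < 1) (hs : 0 < s) {x : ℝ}
    (hx0 : 0 ≤ x) (hx1 : x ≤ 1) : 0 ≤ betaPdf (c * s + 1) ((1 - c) * s + 1) x := by
  unfold betaPdf
  exact div_nonneg (mul_nonneg (Real.rpow_nonneg hx0 _) (Real.rpow_nonneg (by linarith) _))
    (betaFn_pos' hc0 hc1 hs).le

lemma pdf_cont' {c s : ℝ} (hc0 : 0 < c) (hc1 : c < 1) (hs : 0 < s) :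
    Continuous (betaPdf (c * s + 1) ((1 - c) * s + 1)) := by
  unfold betaPdf
  simp only [add_sub_cancel_right]
  exact (integrand_cont hc0 hc1 hs).div_const _

lemma pdf_norm' {c s : ℝ} (hc0 : 0 < c) (hc1 : c < 1) (hs : 0 < s) :
    ∫ x in (0:ℝ)..1, betaPdf (c * s + 1) ((1 - c) * s + 1) x = 1 := by
  unfold betaPdf
  rw [intervalIntegral.integral_div]
  exact div_self (betaFn_pos' hc0 hc1 hs).ne'

lemma tail_le {c θ s : ℝ} (hc0 : 0 < c) (hc1 : c < 1) (hθ1 : θ < 1) (hcθ : c < θ)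
    (hs : 0 < s) :
    ∫ x in θ..1, betaPdf (c * s + 1) ((1 - c) * s + 1) x ≤
      ((1 - θ) / ((c + θ) / 2 - c)) *
        (c * (θ / ((c + θ) / 2)) + (1 - c) * ((1 - θ) / (1 - (c + θ) / 2))) ^ s := by
  set u : ℝ := (c + θ) / 2 with hu
  set k : ℝ := c * (θ / u) + (1 - c) * ((1 - θ) / (1 - u)) with hk
  have hθ0 : 0 < θ := lt_trans hc0 hcθ
  have hu0 : 0 < u := by rw [hu]; linarith
  have hu1 : u < 1 := by rw [hu]; linarith
  have hcu : c < u := by rw [hu]; linarith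
  have hgunn : 0 ≤ u ^ c * (1 - u) ^ (1 - c) :=
    mul_nonneg (Real.rpow_nonneg hu0.le _) (Real.rpow_nonneg (by linarith) _)
  have hknn : 0 ≤ k := by
    rw [hk]
    have h1 : 0 ≤ θ / u := div_nonneg hθ0.le hu0.le
    have h2 : 0 ≤ (1 - θ) / (1 - u) := div_nonneg (by linarith) (by linarith)
    nlinarith
  have htail : ∫ x in θ..1, betaPdf (c * s + 1) ((1 - c) * s + 1) x =
      (∫ x in θ..1, x ^ (c * s) * (1 - x) ^ ((1 - c) * s)) / betaFn (c*s+1) ((1-c)*s+1) := by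
    unfold betaPdf
    simp only [add_sub_cancel_right]
    rw [intervalIntegral.integral_div]
  have hN : (∫ x in θ..1, x ^ (c * s) * (1 - x) ^ ((1 - c) * s)) ≤
      (1 - θ) * (θ ^ c * (1 - θ) ^ (1 - c)) ^ s := by
    have := intervalIntegral.integral_mono_on (μ := volume) hθ1.le
      ((integrand_cont hc0 hc1 hs).intervalIntegrable θ 1) intervalIntegrable_const
      (g := fun _ : ℝ => (θ ^ c * (1 - θ) ^ (1 - c)) ^ s)
      (fun x hx => by
        have hx0 : 0 ≤ x := le_trans hθ0.le hx.1
        rw [← g_pow_eq hx0 hx.2]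
        exact Real.rpow_le_rpow
          (mul_nonneg (Real.rpow_nonneg hx0 _) (Real.rpow_nonneg (by linarith [hx.2]) _))
          (g_anti_right hc0 hc1 hcθ.le hx.1 hθ1 hx.2) hs.le)
    simpa [intervalIntegral.integral_const, smul_eq_mul] using this
  have hNnn : 0 ≤ ∫ x in θ..1, x ^ (c * s) * (1 - x) ^ ((1 - c) * s) :=
    intervalIntegral.integral_nonneg hθ1.le fun x hx =>
      mul_nonneg (Real.rpow_nonneg (le_trans hθ0.le hx.1) _)
        (Real.rpow_nonneg (by linarith [hx.2]) _)
  have hgθk : (θ ^ c * (1 - θ) ^ (1 - c)) ^ s ≤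
      (u ^ c * (1 - u) ^ (1 - c)) ^ s * k ^ s := by
    rw [← Real.mul_rpow hgunn hknn]
    exact Real.rpow_le_rpow
      (mul_nonneg (Real.rpow_nonneg hθ0.le _) (Real.rpow_nonneg (by linarith) _))
      (gmb hc0 hc1 hu0 hu1 hθ0.le hθ1.le) hs.le
  have hgupos : 0 < (u ^ c * (1 - u) ^ (1 - c)) ^ s :=
    Real.rpow_pos_of_pos
      (mul_pos (Real.rpow_pos_of_pos hu0 _) (Real.rpow_pos_of_pos (by linarith) _)) _
  have hD : 0 < (u - c) * (u ^ c * (1 - u) ^ (1 - c)) ^ s :=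
    mul_pos (by linarith) hgupos
  have hB := betaFn_lower (θ := θ) hc0 hc1 hθ1 hcθ hs
  rw [htail]
  calc (∫ x in θ..1, x ^ (c * s) * (1 - x) ^ ((1 - c) * s)) / betaFn (c*s+1) ((1-c)*s+1)
      ≤ ((1 - θ) * ((u ^ c * (1 - u) ^ (1 - c)) ^ s * k ^ s)) /
          ((u - c) * (u ^ c * (1 - u) ^ (1 - c)) ^ s) := by
        apply div_le_div₀
        · apply mul_nonneg (by linarith)
          exact mul_nonneg hgupos.le (Real.rpow_nonneg hknn _)
        · calc (∫ x in θ..1, x ^ (c * s) * (1 - x) ^ ((1 - c) * s))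
              ≤ (1 - θ) * (θ ^ c * (1 - θ) ^ (1 - c)) ^ s := hN
            _ ≤ (1 - θ) * ((u ^ c * (1 - u) ^ (1 - c)) ^ s * k ^ s) := by
                apply mul_le_mul_of_nonneg_left hgθk (by linarith)
        · exact hD
        · exact hB
    _ = ((1 - θ) / (u - c)) * k ^ s := by
        rw [show (1 - θ) * ((u ^ c * (1 - u) ^ (1 - c)) ^ s * k ^ s)
              = ((1 - θ) * k ^ s) * ((u ^ c * (1 - u) ^ (1 - c)) ^ s) from by ring,
            mul_div_mul_right _ _ hgupos.ne', mul_div_right_comm]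

lemma right_tail_tendsto {c θ : ℝ} (hc0 : 0 < c) (hc1 : c < 1) (hθ1 : θ < 1) (hcθ : c < θ)
    (S : ℕ → ℝ) (hSpos : ∀ n, 0 < S n) (hS : Tendsto S atTop atTop) :
    Tendsto (fun n => ∫ x in θ..1, betaPdf (c * S n + 1) ((1 - c) * S n + 1) x)
      atTop (nhds 0) := by
  set u : ℝ := (c + θ) / 2 with hu
  set k : ℝ := c * (θ / u) + (1 - c) * ((1 - θ) / (1 - u)) with hk
  have hθ0 : 0 < θ := lt_trans hc0 hcθ
  have hu0 : 0 < u := by rw [hu]; linarith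
  have hu1 : u < 1 := by rw [hu]; linarith
  have hcu : c < u := by rw [hu]; linarith
  have huθ : u < θ := by rw [hu]; linarith
  have hknn : 0 ≤ k := by
    rw [hk]
    have h1 : 0 ≤ θ / u := div_nonneg hθ0.le hu0.le
    have h2 : 0 ≤ (1 - θ) / (1 - u) := div_nonneg (by linarith) (by linarith)
    nlinarith
  have hk1 : k < 1 := by
    have h := phi_sub_one (c := c) (u := u) (v := θ) hu0.ne' hu1.ne
    have hnum : (θ - u) * (c - u) < 0 :=
      mul_neg_of_pos_of_neg (by linarith) (by linarith)
    have : (θ - u) * (c - u) / (u * (1 - u)) < 0 :=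
      div_neg_of_neg_of_pos hnum (mul_pos hu0 (by linarith))
    rw [hk]; linarith
  have hlim : Tendsto (fun n => ((1 - θ) / (u - c)) * k ^ S n) atTop (nhds 0) := by
    have h0 : Tendsto (fun n => k ^ S n) atTop (nhds 0) :=
      (tendsto_rpow_atTop_of_base_lt_one k (by linarith) hk1).comp hS
    simpa using h0.const_mul ((1 - θ) / (u - c))
  apply tendsto_of_tendsto_of_tendsto_of_le_of_le tendsto_const_nhds hlim
  · intro n
    exact intervalIntegral.integral_nonneg hθ1.le fun x hx =>
      pdf_nonneg' hc0 hc1 (hSpos n) (le_trans hθ0.le hx.1) hx.2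
  · intro n
    exact tail_le hc0 hc1 hθ1 hcθ (hSpos n)

lemma betaFn_symm (a b : ℝ) : betaFn a b = betaFn b a := by
  unfold betaFn
  have h : ∀ x ∈ uIcc (0:ℝ) 1,
      x ^ (a - 1) * (1 - x) ^ (b - 1) = (fun t => t ^ (b - 1) * (1 - t) ^ (a - 1)) (1 - x) := by
    intro x _
    simp only [sub_sub_cancel]
    exact (mul_comm _ _)
  rw [intervalIntegral.integral_congr h,
    intervalIntegral.integral_comp_sub_left (fun t => t ^ (b - 1) * (1 - t) ^ (a - 1)) 1]
  norm_num

lemma pdf_symm (a b x : ℝ) : betaPdf a b x = betaPdf b a (1 - x) := by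
  unfold betaPdf
  rw [sub_sub_cancel, betaFn_symm a b, mul_comm]

lemma left_eq_right (a b θ : ℝ) :
    ∫ x in (0:ℝ)..θ, betaPdf a b x = ∫ x in (1 - θ)..1, betaPdf b a x := by
  have h : ∀ x ∈ uIcc (0:ℝ) θ, betaPdf a b x = (fun t => betaPdf b a t) (1 - x) :=
    fun x _ => pdf_symm a b x
  rw [intervalIntegral.integral_congr h,
    intervalIntegral.integral_comp_sub_left (fun t => betaPdf b a t) 1]
  norm_num

lemma left_tail_tendsto {c θ : ℝ} (hc0 : 0 < c) (hc1 : c < 1) (hθ0 : 0 < θ) (hθc : θ < c)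
    (S : ℕ → ℝ) (hSpos : ∀ n, 0 < S n) (hS : Tendsto S atTop atTop) :
    Tendsto (fun n => ∫ x in (0:ℝ)..θ, betaPdf (c * S n + 1) ((1 - c) * S n + 1) x)
      atTop (nhds 0) := by
  have h := right_tail_tendsto (c := 1 - c) (θ := 1 - θ) (by linarith) (by linarith)
    (by linarith) (by linarith) S hSpos hS
  simp only [sub_sub_cancel] at h
  have he : (fun n => ∫ x in (0:ℝ)..θ, betaPdf (c * S n + 1) ((1 - c) * S n + 1) x)
      = fun n => ∫ x in (1 - θ)..1, betaPdf ((1 - c) * S n + 1) (c * S n + 1) x :=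
    funext fun n => left_eq_right _ _ θ
  rw [he]
  exact h

lemma F_nonneg' {c s : ℝ} (hc0 : 0 < c) (hc1 : c < 1) (hs : 0 < s) {x : ℝ}
    (hx0 : 0 ≤ x) (hx1 : x ≤ 1) :
    0 ≤ ∫ t in (0:ℝ)..x, betaPdf (c * s + 1) ((1 - c) * s + 1) t :=
  intervalIntegral.integral_nonneg hx0 fun t ht =>
    pdf_nonneg' hc0 hc1 hs ht.1 (le_trans ht.2 hx1)

lemma F_split {c s θ : ℝ} (hc0 : 0 < c) (hc1 : c < 1) (hs : 0 < s) :
    (∫ t in (0:ℝ)..θ, betaPdf (c * s + 1) ((1 - c) * s + 1) t)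
      + ∫ t in θ..1, betaPdf (c * s + 1) ((1 - c) * s + 1) t = 1 := by
  have hint := fun a b => (pdf_cont' hc0 hc1 hs).intervalIntegrable (μ := volume) a b
  rw [intervalIntegral.integral_add_adjacent_intervals (hint 0 θ) (hint θ 1)]
  exact pdf_norm' hc0 hc1 hs

lemma F_mono' {c s θ x : ℝ} (hc0 : 0 < c) (hc1 : c < 1) (hs : 0 < s)
    (hθ0 : 0 ≤ θ) (hθx : θ ≤ x) (hx1 : x ≤ 1) :
    (∫ t in (0:ℝ)..θ, betaPdf (c * s + 1) ((1 - c) * s + 1) t)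
      ≤ ∫ t in (0:ℝ)..x, betaPdf (c * s + 1) ((1 - c) * s + 1) t := by
  have hint := fun a b => (pdf_cont' hc0 hc1 hs).intervalIntegrable (μ := volume) a b
  rw [← intervalIntegral.integral_add_adjacent_intervals (hint 0 θ) (hint θ x)]
  have h : 0 ≤ ∫ t in θ..x, betaPdf (c * s + 1) ((1 - c) * s + 1) t :=
    intervalIntegral.integral_nonneg hθx fun t ht =>
      pdf_nonneg' hc0 hc1 hs (le_trans hθ0 ht.1) (le_trans ht.2 hx1)
  linarith

lemma F_le_one' {c s x : ℝ} (hc0 : 0 < c) (hc1 : c < 1) (hs : 0 < s)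
    (hx0 : 0 ≤ x) (hx1 : x ≤ 1) :
    (∫ t in (0:ℝ)..x, betaPdf (c * s + 1) ((1 - c) * s + 1) t) ≤ 1 := by
  have h := F_split (θ := x) hc0 hc1 hs
  have h2 : 0 ≤ ∫ t in x..1, betaPdf (c * s + 1) ((1 - c) * s + 1) t :=
    intervalIntegral.integral_nonneg hx1 fun t ht =>
      pdf_nonneg' hc0 hc1 hs (le_trans hx0 ht.1) ht.2
  linarith

/-- CDF at `θ` tends to 1 when `c < θ`. -/
lemma F_tendsto_one {c θ : ℝ} (hc0 : 0 < c) (hc1 : c < 1) (hθ1 : θ < 1) (hcθ : c < θ)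
    (S : ℕ → ℝ) (hSpos : ∀ n, 0 < S n) (hS : Tendsto S atTop atTop) :
    Tendsto (fun n => ∫ t in (0:ℝ)..θ, betaPdf (c * S n + 1) ((1 - c) * S n + 1) t)
      atTop (nhds 1) := by
  have h := (tendsto_const_nhds (x := (1:ℝ)) (f := atTop)).sub
    (right_tail_tendsto hc0 hc1 hθ1 hcθ S hSpos hS)
  rw [sub_zero] at h
  refine h.congr fun n => ?_
  have := F_split (θ := θ) hc0 hc1 (hSpos n)
  linarith

/-- Upper-tail integral from `θ` tends to 1 when `θ < c`. -/
lemma Fm_tendsto_one {c θ : ℝ} (hc0 : 0 < c) (hc1 : c < 1) (hθ0 : 0 < θ) (hθc : θ < c)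
    (S : ℕ → ℝ) (hSpos : ∀ n, 0 < S n) (hS : Tendsto S atTop atTop) :
    Tendsto (fun n => ∫ x in θ..1, betaPdf (c * S n + 1) ((1 - c) * S n + 1) x)
      atTop (nhds 1) := by
  have h := (tendsto_const_nhds (x := (1:ℝ)) (f := atTop)).sub
    (left_tail_tendsto hc0 hc1 hθ0 hθc S hSpos hS)
  rw [sub_zero] at h
  refine h.congr fun n => ?_
  have := F_split (θ := θ) hc0 hc1 (hSpos n)
  linarith

/-- Lemma 2: the probability that the Beta-distributed estimate of the action with the
strictly maximal reward probability exceeds all other estimates tends to `1` as all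
observation counts tend to infinity. -/
theorem best_estimate_wins (r : ℕ) (hr : 2 ≤ r) (c : Fin r → ℝ)
    (hc : ∀ i, c i ∈ Set.Ioo (0:ℝ) 1) (m : Fin r) (hm : ∀ i, i ≠ m → c i < c m)
    (S : Fin r → ℕ → ℝ) (hSpos : ∀ i n, 0 < S i n)
    (hS : ∀ i, Tendsto (S i) atTop atTop) :
    Tendsto (fun n : ℕ =>
        ∫ x in (0:ℝ)..1,
          betaPdf (c m * S m n + 1) ((1 - c m) * S m n + 1) x *
            ∏ i ∈ Finset.univ.erase m,
              ∫ t in (0:ℝ)..x, betaPdf (c i * S i n + 1) ((1 - c i) * S i n + 1) t)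
      atTop (nhds 1) := by
  have hc0 : ∀ i, 0 < c i := fun i => (hc i).1
  have hc1 : ∀ i, c i < 1 := fun i => (hc i).2
  set E := Finset.univ.erase m with hE
  have hEne : E.Nonempty := by
    rw [← Finset.card_pos, hE, Finset.card_erase_of_mem (Finset.mem_univ m),
      Finset.card_univ, Fintype.card_fin]
    omega
  set M := E.sup' hEne c with hM
  have hMlt : M < c m := by
    rw [hM]
    exact (Finset.sup'_lt_iff hEne).mpr fun i hi => hm i (Finset.ne_of_mem_erase hi)
  have hMge : ∀ i ∈ E, c i ≤ M := fun i hi => Finset.le_sup' c hi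
  have hMpos : 0 < M := by
    obtain ⟨i0, hi0⟩ := hEne
    exact lt_of_lt_of_le (hc0 i0) (hMge i0 hi0)
  set θ : ℝ := (M + c m) / 2 with hθ
  have hθ0 : 0 < θ := by rw [hθ]; linarith [hc0 m]
  have hθ1 : θ < 1 := by rw [hθ]; linarith [hc1 m]
  have hθcm : θ < c m := by rw [hθ]; linarith
  have hciθ : ∀ i ∈ E, c i < θ := fun i hi => by
    have := hMge i hi; rw [hθ]; linarith
  -- notation
  set Fi : Fin r → ℕ → ℝ → ℝ := fun i n x =>
    ∫ t in (0:ℝ)..x, betaPdf (c i * S i n + 1) ((1 - c i) * S i n + 1) t with hFi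
  -- lower bound sequence
  set L : ℕ → ℝ := fun n =>
    (∏ i ∈ E, Fi i n θ) *
      ∫ x in θ..1, betaPdf (c m * S m n + 1) ((1 - c m) * S m n + 1) x with hL
  have hLlim : Tendsto L atTop (nhds 1) := by
    have hprod : Tendsto (fun n => ∏ i ∈ E, Fi i n θ) atTop (nhds (∏ _i ∈ E, (1:ℝ))) :=
      tendsto_finset_prod E fun i _hi =>
        F_tendsto_one (hc0 i) (hc1 i) hθ1 (hciθ i _hi) (S i) (hSpos i) (hS i)
    have hmlim := Fm_tendsto_one (hc0 m) (hc1 m) hθ0 hθcm (S m) (hSpos m) (hS m)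
    have := hprod.mul hmlim
    simpa using this
  -- pointwise facts for fixed n
  have hcontF : ∀ (i : Fin r) (n : ℕ), Continuous (Fi i n) := fun i n =>
    intervalIntegral.continuous_primitive
      (fun a b => (pdf_cont' (hc0 i) (hc1 i) (hSpos i n)).intervalIntegrable a b) 0
  have hcontG : ∀ n : ℕ, Continuous fun x =>
      betaPdf (c m * S m n + 1) ((1 - c m) * S m n + 1) x * ∏ i ∈ E, Fi i n x := fun n =>
    (pdf_cont' (hc0 m) (hc1 m) (hSpos m n)).mul
      (continuous_finset_prod E fun i _ => hcontF i n)
  have hupper : ∀ n : ℕ,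
      (∫ x in (0:ℝ)..1,
        betaPdf (c m * S m n + 1) ((1 - c m) * S m n + 1) x * ∏ i ∈ E, Fi i n x) ≤ 1 := by
    intro n
    have hmono : (∫ x in (0:ℝ)..1,
          betaPdf (c m * S m n + 1) ((1 - c m) * S m n + 1) x * ∏ i ∈ E, Fi i n x)
        ≤ ∫ x in (0:ℝ)..1, betaPdf (c m * S m n + 1) ((1 - c m) * S m n + 1) x := by
      apply intervalIntegral.integral_mono_on (by norm_num : (0:ℝ) ≤ 1)
        ((hcontG n).intervalIntegrable 0 1)
        ((pdf_cont' (hc0 m) (hc1 m) (hSpos m n)).intervalIntegrable 0 1)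
      intro x hx
      have hpdf := pdf_nonneg' (hc0 m) (hc1 m) (hSpos m n) hx.1 hx.2
      have hP : (∏ i ∈ E, Fi i n x) ≤ 1 :=
        Finset.prod_le_one
          (fun i _ => F_nonneg' (hc0 i) (hc1 i) (hSpos i n) hx.1 hx.2)
          (fun i _ => F_le_one' (hc0 i) (hc1 i) (hSpos i n) hx.1 hx.2)
      calc betaPdf (c m * S m n + 1) ((1 - c m) * S m n + 1) x * ∏ i ∈ E, Fi i n x
          ≤ betaPdf (c m * S m n + 1) ((1 - c m) * S m n + 1) x * 1 :=
            mul_le_mul_of_nonneg_left hP hpdf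
        _ = betaPdf (c m * S m n + 1) ((1 - c m) * S m n + 1) x := mul_one _
    calc _ ≤ ∫ x in (0:ℝ)..1, betaPdf (c m * S m n + 1) ((1 - c m) * S m n + 1) x := hmono
      _ = 1 := pdf_norm' (hc0 m) (hc1 m) (hSpos m n)
  have hlower : ∀ n : ℕ, L n ≤
      ∫ x in (0:ℝ)..1,
        betaPdf (c m * S m n + 1) ((1 - c m) * S m n + 1) x * ∏ i ∈ E, Fi i n x := by
    intro n
    have hint := fun a b => (hcontG n).intervalIntegrable (μ := volume) a b
    have hsplit : (∫ x in (0:ℝ)..1,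
          betaPdf (c m * S m n + 1) ((1 - c m) * S m n + 1) x * ∏ i ∈ E, Fi i n x)
        = (∫ x in (0:ℝ)..θ,
            betaPdf (c m * S m n + 1) ((1 - c m) * S m n + 1) x * ∏ i ∈ E, Fi i n x)
          + ∫ x in θ..1,
            betaPdf (c m * S m n + 1) ((1 - c m) * S m n + 1) x * ∏ i ∈ E, Fi i n x :=
      (intervalIntegral.integral_add_adjacent_intervals (hint 0 θ) (hint θ 1)).symm
    have h1 : 0 ≤ ∫ x in (0:ℝ)..θ,
        betaPdf (c m * S m n + 1) ((1 - c m) * S m n + 1) x * ∏ i ∈ E, Fi i n x :=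
      intervalIntegral.integral_nonneg hθ0.le fun x hx =>
        mul_nonneg
          (pdf_nonneg' (hc0 m) (hc1 m) (hSpos m n) hx.1 (le_trans hx.2 hθ1.le))
          (Finset.prod_nonneg fun i _ =>
            F_nonneg' (hc0 i) (hc1 i) (hSpos i n) hx.1 (le_trans hx.2 hθ1.le))
    have h2 : L n ≤ ∫ x in θ..1,
        betaPdf (c m * S m n + 1) ((1 - c m) * S m n + 1) x * ∏ i ∈ E, Fi i n x := by
      rw [hL]; dsimp only
      have heq : (∏ i ∈ E, Fi i n θ) *
          (∫ x in θ..1, betaPdf (c m * S m n + 1) ((1 - c m) * S m n + 1) x)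
          = ∫ x in θ..1,
              (∏ i ∈ E, Fi i n θ) * betaPdf (c m * S m n + 1) ((1 - c m) * S m n + 1) x :=
        (intervalIntegral.integral_const_mul _ _).symm
      rw [heq]
      apply intervalIntegral.integral_mono_on hθ1.le
        ((continuous_const.mul (pdf_cont' (hc0 m) (hc1 m) (hSpos m n))).intervalIntegrable θ 1)
        (hint θ 1)
      intro x hx
      have hx0 : 0 ≤ x := le_trans hθ0.le hx.1
      have hpdf := pdf_nonneg' (hc0 m) (hc1 m) (hSpos m n) hx0 hx.2
      have hPmono : (∏ i ∈ E, Fi i n θ) ≤ ∏ i ∈ E, Fi i n x :=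
        Finset.prod_le_prod
          (fun i _ => F_nonneg' (hc0 i) (hc1 i) (hSpos i n) hθ0.le hθ1.le)
          (fun i _ => F_mono' (hc0 i) (hc1 i) (hSpos i n) hθ0.le hx.1 hx.2)
      calc (∏ i ∈ E, Fi i n θ) * betaPdf (c m * S m n + 1) ((1 - c m) * S m n + 1) x
          ≤ (∏ i ∈ E, Fi i n x) * betaPdf (c m * S m n + 1) ((1 - c m) * S m n + 1) x :=
            mul_le_mul_of_nonneg_right hPmono hpdf
        _ = betaPdf (c m * S m n + 1) ((1 - c m) * S m n + 1) x * ∏ i ∈ E, Fi i n x :=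
            mul_comm _ _
    rw [hsplit]
    linarith
  exact tendsto_of_tendsto_of_tendsto_of_le_of_le hLlim tendsto_const_nhds hlower hupper
end

section
/- Let α, β > 0 be fixed and c ∈ (0,1). Then lim_{S→∞} ∫_0^1 f(x; α, β) · I_x(cS+1, (1−c)S+1) dx = ∫_c^1 f(x; α, β) dx = 1 − I_c(α,β), and this limit is strictly positive. (Case 3 of the proof of Lemma 3: if only one action's observation count tends to infinity, the probability that the finitely-sampled action's estimate exceeds the infinitely-sampled one converges to the positive mass that its Beta density places above c, so it cannot tend to zero.) -/
open MeasureTheory Real Filter Set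

/-- The cumulative distribution function of Beta(a,b). -/
noncomputable def betaCdf (a b : ℝ) (x : ℝ) : ℝ :=
  (∫ t in (0:ℝ)..x, t ^ (a - 1) * (1 - t) ^ (b - 1)) / betaFn a b


lemma phi_int_left {a : ℝ} (b : ℝ) (ha : 0 < a) :
    IntervalIntegrable (fun t => t ^ (a - 1) * (1 - t) ^ (b - 1)) volume 0 (1/2) := by
  have hmeas : AEStronglyMeasurable (fun t : ℝ => t ^ (a - 1) * (1 - t) ^ (b - 1))
      (volume.restrict (Set.uIoc (0:ℝ) (1/2))) :=
    (((measurable_id.pow_const _).mul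
      ((measurable_const.sub measurable_id).pow_const _)).aestronglyMeasurable)
  set C : ℝ := (1/2 : ℝ) ^ (b - 1) + 1 with hC
  have hrp : (0:ℝ) < (1/2 : ℝ) ^ (b - 1) := Real.rpow_pos_of_pos (by norm_num) _
  have hCpos : 0 < C := by rw [hC]; linarith
  have hint : IntervalIntegrable (fun t : ℝ => C * t ^ (a - 1)) volume 0 (1/2) :=
    (intervalIntegral.intervalIntegrable_rpow' (by linarith)).const_mul C
  refine hint.mono_fun hmeas ?_
  rw [Filter.EventuallyLE, ae_restrict_iff' measurableSet_uIoc]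
  filter_upwards with t ht
  rw [Set.uIoc_of_le (by norm_num : (0:ℝ) ≤ 1/2)] at ht
  obtain ⟨ht0, ht1⟩ := ht
  have h1t : (1:ℝ)/2 ≤ 1 - t := by linarith
  have hb : (1 - t) ^ (b - 1) ≤ C := by
    rcases le_or_gt 0 (b-1) with h | h
    · calc (1-t) ^ (b-1) ≤ 1 ^ (b-1) :=
            Real.rpow_le_rpow (by linarith) (by linarith) h
        _ ≤ C := by rw [Real.one_rpow, hC]; linarith
    · calc (1-t) ^ (b-1) ≤ (1/2) ^ (b-1) :=
            Real.rpow_le_rpow_of_nonpos (by norm_num) h1t h.le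
        _ ≤ C := by rw [hC]; linarith
  have hta : 0 < t ^ (a - 1) := Real.rpow_pos_of_pos ht0 _
  simp only [Real.norm_eq_abs]
  rw [abs_of_nonneg (by positivity), abs_of_nonneg (by positivity)]
  calc t ^ (a-1) * (1-t) ^ (b-1) ≤ t ^ (a-1) * C :=
        mul_le_mul_of_nonneg_left hb hta.le
    _ = C * t ^ (a-1) := mul_comm _ _

lemma phi_integrable {a b : ℝ} (ha : 0 < a) (hb : 0 < b) :
    IntervalIntegrable (fun t => t ^ (a - 1) * (1 - t) ^ (b - 1)) volume 0 1 := by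
  have h1 := phi_int_left b ha
  have h2 := ((phi_int_left a hb).comp_sub_left 1).symm
  have heq : (fun x : ℝ => (fun t : ℝ => t ^ (b - 1) * (1 - t) ^ (a - 1)) (1 - x))
      = fun t : ℝ => t ^ (a - 1) * (1 - t) ^ (b - 1) := by
    funext x; simp only []; rw [sub_sub_cancel]; ring
  rw [heq] at h2
  norm_num at h2
  exact h1.trans h2

lemma betaFn_pos {a b : ℝ} (ha : 0 < a) (hb : 0 < b) : 0 < betaFn a b := by
  apply intervalIntegral.intervalIntegral_pos_of_pos_on (phi_integrable ha hb) _ one_pos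
  intro x hx
  have := Real.rpow_pos_of_pos hx.1 (a-1)
  have := Real.rpow_pos_of_pos (by linarith [hx.2] : (0:ℝ) < 1 - x) (b-1)
  positivity

-- monotonicity of g t = t^c (1-t)^(1-c)
lemma g_deriv {c t : ℝ} (ht0 : 0 < t) (ht1 : t < 1) :
    HasDerivAt (fun t : ℝ => t ^ c * (1 - t) ^ (1 - c))
      (t ^ (c-1) * (1-t) ^ (-c) * (c - t)) t := by
  have h1 : HasDerivAt (fun t : ℝ => t ^ c) (c * t ^ (c - 1)) t :=
    Real.hasDerivAt_rpow_const (Or.inl ht0.ne')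
  have hin : HasDerivAt (fun t : ℝ => 1 - t) (-1) t := by
    simpa using (hasDerivAt_id t).const_sub 1
  have h2 : HasDerivAt (fun t : ℝ => (1 - t) ^ (1 - c))
      ((1 - c) * (1 - t) ^ (1 - c - 1) * (-1)) t :=
    (Real.hasDerivAt_rpow_const (p := 1 - c) (Or.inl (by linarith : (1:ℝ) - t ≠ 0))).comp t hin
  have := h1.mul h2
  refine this.congr_deriv ?_
  have e1 : t ^ c = t ^ (c - 1) * t := by
    rw [← Real.rpow_add_one ht0.ne' (c-1)]; ring_nf
  have e2 : (1 - t) ^ (1 - c) = (1-t) ^ (-c) * (1 - t) := by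
    rw [← Real.rpow_add_one (by linarith : (1:ℝ) - t ≠ 0) (-c)]; ring_nf
  have e3 : (1 - t) ^ (1 - c - 1) = (1-t) ^ (-c) := by ring_nf
  rw [e1, e2, e3]; ring

lemma g_mono {c : ℝ} (hc0 : 0 < c) (hc1 : c < 1) :
    StrictMonoOn (fun t : ℝ => t ^ c * (1 - t) ^ (1 - c)) (Icc 0 c) := by
  have hcont : ContinuousOn (fun t : ℝ => t ^ c * (1 - t) ^ (1 - c)) (Icc 0 c) := by
    apply ContinuousOn.mul
    · intro x _; exact (Real.continuousAt_rpow_const x c (Or.inr hc0.le)).continuousWithinAt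
    · intro x _
      exact (Real.continuousAt_rpow_const (1-x) (1-c) (Or.inr (by linarith : (0:ℝ) ≤ 1 - c))).comp
        (continuous_const.sub continuous_id).continuousAt |>.continuousWithinAt
  apply strictMonoOn_of_deriv_pos (convex_Icc 0 c) hcont
  intro t ht
  rw [interior_Icc] at ht
  rw [(g_deriv ht.1 (lt_trans ht.2 hc1)).deriv]
  have h1 := Real.rpow_pos_of_pos ht.1 (c-1)
  have h2 := Real.rpow_pos_of_pos (by linarith [lt_trans ht.2 hc1] : (0:ℝ) < 1 - t) (-c)
  have h3 : t < c := ht.2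
  nlinarith [mul_pos h1 h2]

lemma g_anti {c : ℝ} (hc0 : 0 < c) (hc1 : c < 1) :
    StrictAntiOn (fun t : ℝ => t ^ c * (1 - t) ^ (1 - c)) (Icc c 1) := by
  have hcont : ContinuousOn (fun t : ℝ => t ^ c * (1 - t) ^ (1 - c)) (Icc c 1) := by
    apply ContinuousOn.mul
    · intro x _; exact (Real.continuousAt_rpow_const x c (Or.inr hc0.le)).continuousWithinAt
    · intro x _
      exact (Real.continuousAt_rpow_const (1-x) (1-c) (Or.inr (by linarith : (0:ℝ) ≤ 1 - c))).comp
        (continuous_const.sub continuous_id).continuousAt |>.continuousWithinAt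
  apply strictAntiOn_of_deriv_neg (convex_Icc c 1) hcont
  intro t ht
  rw [interior_Icc] at ht
  rw [(g_deriv (lt_trans hc0 ht.1) ht.2).deriv]
  have h1 := Real.rpow_pos_of_pos (lt_trans hc0 ht.1) (c-1)
  have h2 := Real.rpow_pos_of_pos (by linarith [ht.2] : (0:ℝ) < 1 - t) (-c)
  have h3 : c < t := ht.1
  nlinarith [mul_pos h1 h2]

lemma tendsto_ratio_zero (g : ℝ → ℝ)
    (hg0 : ∀ t ∈ Icc (0:ℝ) 1, 0 ≤ g t)
    (hg_int : ∀ S : ℝ, 0 ≤ S → IntervalIntegrable (fun t => g t ^ S) volume 0 1)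
    {p q p' q' M m : ℝ} (hp : 0 ≤ p) (hpq : p ≤ q) (hq1 : q ≤ 1)
    (hp'0 : 0 ≤ p') (hp'q' : p' < q') (hq'1 : q' ≤ 1)
    (hM : ∀ t ∈ Icc p q, g t ≤ M) (hm : ∀ t ∈ Icc p' q', m ≤ g t)
    (hm0 : 0 < m) (hMm : M < m) (hM0 : 0 ≤ M) :
    Tendsto (fun S : ℝ => (∫ t in p..q, g t ^ S) / (∫ t in (0:ℝ)..1, g t ^ S))
      atTop (nhds 0) := by
  have hbound : Tendsto (fun S : ℝ => ((q - p) / (q' - p')) * (M / m) ^ S) atTop (nhds 0) := by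
    have hb0 : (0:ℝ) ≤ M / m := div_nonneg hM0 hm0.le
    have h1 : Tendsto (fun S : ℝ => (M / m) ^ S) atTop (nhds 0) :=
      tendsto_rpow_atTop_of_base_lt_one _ (by linarith) ((div_lt_one hm0).mpr hMm)
    simpa using h1.const_mul ((q - p) / (q' - p'))
  apply squeeze_zero' ?_ ?_ hbound
  · filter_upwards [eventually_ge_atTop (0:ℝ)] with S hS
    apply div_nonneg
    · apply intervalIntegral.integral_nonneg hpq
      intro t ht
      exact Real.rpow_nonneg (hg0 t ⟨le_trans hp ht.1, le_trans ht.2 hq1⟩) S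
    · apply intervalIntegral.integral_nonneg (by norm_num)
      intro t ht
      exact Real.rpow_nonneg (hg0 t ht) S
  · filter_upwards [eventually_ge_atTop (0:ℝ)] with S hS
    have hMS : ∀ t ∈ Icc p q, g t ^ S ≤ M ^ S := fun t ht =>
      Real.rpow_le_rpow (hg0 t ⟨le_trans hp ht.1, le_trans ht.2 hq1⟩) (hM t ht) hS
    have hnum : (∫ t in p..q, g t ^ S) ≤ (q - p) * M ^ S := by
      have := intervalIntegral.integral_mono_on hpq
        ((hg_int S hS).mono_set (by rw [Set.uIcc_of_le hpq, Set.uIcc_of_le (by norm_num : (0:ℝ)≤1)]; exact Icc_subset_Icc hp hq1))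
        (intervalIntegrable_const) hMS
      simpa using this
    have hden1 : (q' - p') * m ^ S ≤ ∫ t in p'..q', g t ^ S := by
      have := intervalIntegral.integral_mono_on hp'q'.le intervalIntegrable_const
        ((hg_int S hS).mono_set (by rw [Set.uIcc_of_le hp'q'.le, Set.uIcc_of_le (by norm_num : (0:ℝ)≤1)]; exact Icc_subset_Icc hp'0 hq'1))
        (fun t ht => Real.rpow_le_rpow hm0.le (hm t ht) hS)
      simpa using this
    have hden2 : (∫ t in p'..q', g t ^ S) ≤ ∫ t in (0:ℝ)..1, g t ^ S := by
      apply intervalIntegral.integral_mono_interval hp'0 hp'q'.le hq'1 ?_ (hg_int S hS)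
      rw [Filter.EventuallyLE, ae_restrict_iff' measurableSet_Ioc]
      filter_upwards with t ht
      exact Real.rpow_nonneg (hg0 t ⟨ht.1.le, ht.2⟩) S
    have hqp' : (0:ℝ) < (q' - p') * m ^ S :=
      mul_pos (sub_pos.mpr hp'q') (Real.rpow_pos_of_pos hm0 S)
    have hnum0 : (0:ℝ) ≤ (q - p) * M ^ S :=
      mul_nonneg (sub_nonneg.mpr hpq) (Real.rpow_nonneg hM0 S)
    calc (∫ t in p..q, g t ^ S) / (∫ t in (0:ℝ)..1, g t ^ S)
        ≤ ((q - p) * M ^ S) / ((q' - p') * m ^ S) :=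
          div_le_div₀ hnum0 hnum hqp' (hden1.trans hden2)
      _ = ((q - p) / (q' - p')) * (M / m) ^ S := by
          rw [Real.div_rpow hM0 hm0.le]; field_simp

lemma uIcc_sub {a b : ℝ} (h0 : 0 ≤ a) (hab : a ≤ b) (h1 : b ≤ 1) :
    Set.uIcc a b ⊆ Set.uIcc (0:ℝ) 1 := by
  rw [Set.uIcc_of_le hab, Set.uIcc_of_le (by norm_num : (0:ℝ) ≤ 1)]
  exact Icc_subset_Icc h0 h1

section G
variable {c : ℝ} (hc0 : 0 < c) (hc1 : c < 1)

lemma g_nonneg : ∀ t ∈ Icc (0:ℝ) 1, 0 ≤ t ^ c * (1 - t) ^ (1 - c) := by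
  intro t ht
  exact mul_nonneg (Real.rpow_nonneg ht.1 _) (Real.rpow_nonneg (by linarith [ht.2]) _)

lemma phi_eq_gS (S : ℝ) : ∀ t ∈ Icc (0:ℝ) 1,
    t ^ (c * S + 1 - 1) * (1 - t) ^ ((1 - c) * S + 1 - 1)
      = (t ^ c * (1 - t) ^ (1 - c)) ^ S := by
  intro t ht
  have h1t : (0:ℝ) ≤ 1 - t := by linarith [ht.2]
  rw [add_sub_cancel_right, add_sub_cancel_right,
    Real.mul_rpow (Real.rpow_nonneg ht.1 c) (Real.rpow_nonneg h1t _),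
    ← Real.rpow_mul ht.1, ← Real.rpow_mul h1t]

include hc0 hc1 in
lemma gS_int {S : ℝ} (hS : 0 ≤ S) :
    IntervalIntegrable (fun t => (t ^ c * (1 - t) ^ (1 - c)) ^ S) volume 0 1 := by
  have h := phi_integrable (a := c * S + 1) (b := (1 - c) * S + 1)
    (by nlinarith) (by nlinarith)
  rw [intervalIntegrable_iff_integrableOn_Ioc_of_le (by norm_num)] at h ⊢
  exact h.congr_fun (fun t ht => phi_eq_gS S t ⟨ht.1.le, ht.2⟩) measurableSet_Ioc

include hc0 hc1 in
lemma cdf_eq_ratio {S x : ℝ} (hS : 0 ≤ S) (hx0 : 0 ≤ x) (hx1 : x ≤ 1) :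
    betaCdf (c * S + 1) ((1 - c) * S + 1) x
      = (∫ t in (0:ℝ)..x, (t ^ c * (1 - t) ^ (1 - c)) ^ S)
        / (∫ t in (0:ℝ)..1, (t ^ c * (1 - t) ^ (1 - c)) ^ S) := by
  unfold betaCdf betaFn
  congr 1
  · apply intervalIntegral.integral_congr
    intro t ht
    rw [Set.uIcc_of_le hx0] at ht
    exact phi_eq_gS S t ⟨ht.1, le_trans ht.2 hx1⟩
  · apply intervalIntegral.integral_congr
    intro t ht
    rw [Set.uIcc_of_le (by norm_num : (0:ℝ) ≤ 1)] at ht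
    exact phi_eq_gS S t ht

include hc0 hc1 in
lemma cdf_tendsto_lt {x : ℝ} (hx0 : 0 < x) (hxc : x < c) :
    Tendsto (fun S : ℝ => betaCdf (c * S + 1) ((1 - c) * S + 1) x) atTop (nhds 0) := by
  set g : ℝ → ℝ := fun t => t ^ c * (1 - t) ^ (1 - c) with hg
  set p' : ℝ := (x + c) / 2 with hp'
  have hx1 : x < 1 := hxc.trans hc1
  have hxp' : x < p' := by rw [hp']; linarith
  have hp'c : p' < c := by rw [hp']; linarith
  have hmono := g_mono hc0 hc1
  have key : Tendsto (fun S : ℝ => (∫ t in (0:ℝ)..x, g t ^ S) / (∫ t in (0:ℝ)..1, g t ^ S))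
      atTop (nhds 0) := by
    apply tendsto_ratio_zero g (g_nonneg) (fun S hS => gS_int hc0 hc1 hS)
      le_rfl hx0.le hx1.le (by rw [hp']; positivity) hp'c (by linarith)
      (M := g x) (m := g p')
    · intro t ht
      rcases eq_or_lt_of_le ht.2 with h | h
      · rw [h]
      · exact (hmono ⟨ht.1, le_trans ht.2 (by linarith)⟩ ⟨hx0.le, hxc.le⟩ h).le
    · intro t ht
      rcases eq_or_lt_of_le ht.1 with h | h
      · rw [← h]
      · exact (hmono ⟨by linarith [ht.1], by linarith [ht.2]⟩ ⟨le_trans (by linarith) ht.1, ht.2⟩ h).le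
    · apply mul_pos (Real.rpow_pos_of_pos (by linarith) _)
        (Real.rpow_pos_of_pos (by rw [hp']; nlinarith) _)
    · exact hmono ⟨hx0.le, hxc.le⟩ ⟨by linarith, hp'c.le⟩ hxp'
    · exact mul_nonneg (Real.rpow_nonneg hx0.le _) (Real.rpow_nonneg (by linarith) _)
  apply key.congr'
  filter_upwards [eventually_ge_atTop (0:ℝ)] with S hS
  exact (cdf_eq_ratio hc0 hc1 hS hx0.le hx1.le).symm

include hc0 hc1 in
lemma cdf_tendsto_gt {x : ℝ} (hcx : c < x) (hx1 : x < 1) :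
    Tendsto (fun S : ℝ => betaCdf (c * S + 1) ((1 - c) * S + 1) x) atTop (nhds 1) := by
  set g : ℝ → ℝ := fun t => t ^ c * (1 - t) ^ (1 - c) with hg
  set q' : ℝ := (c + x) / 2 with hq'
  have hx0 : 0 < x := hc0.trans hcx
  have hcq' : c < q' := by rw [hq']; linarith
  have hq'x : q' < x := by rw [hq']; linarith
  have hanti := g_anti hc0 hc1
  have key : Tendsto (fun S : ℝ => (∫ t in x..1, g t ^ S) / (∫ t in (0:ℝ)..1, g t ^ S))
      atTop (nhds 0) := by
    apply tendsto_ratio_zero g (g_nonneg) (fun S hS => gS_int hc0 hc1 hS)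
      hx0.le hx1.le le_rfl hc0.le hcq' (by linarith)
      (M := g x) (m := g q')
    · intro t ht
      rcases eq_or_lt_of_le ht.1 with h | h
      · rw [← h]
      · exact (hanti ⟨hcx.le, hx1.le⟩ ⟨le_trans hcx.le (le_of_lt h), ht.2⟩ h).le
    · intro t ht
      rcases eq_or_lt_of_le ht.2 with h | h
      · rw [h]
      · exact (hanti ⟨ht.1, by linarith [ht.2]⟩ ⟨hcq'.le, by linarith⟩ h).le
    · apply mul_pos (Real.rpow_pos_of_pos (by linarith) _)
        (Real.rpow_pos_of_pos (by rw [hq']; nlinarith) _)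
    · exact hanti ⟨hcq'.le, by linarith⟩ ⟨hcx.le, hx1.le⟩ hq'x
    · exact mul_nonneg (Real.rpow_nonneg hx0.le _) (Real.rpow_nonneg (by linarith) _)
  have key1 : Tendsto (fun S : ℝ => 1 - (∫ t in x..1, g t ^ S) / (∫ t in (0:ℝ)..1, g t ^ S))
      atTop (nhds 1) := by
    simpa using (tendsto_const_nhds (x := (1:ℝ))).sub key
  apply key1.congr'
  filter_upwards [eventually_ge_atTop (0:ℝ)] with S hS
  have hint := gS_int hc0 hc1 hS
  have hi1 : IntervalIntegrable (fun t => g t ^ S) volume 0 x :=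
    hint.mono_set (uIcc_sub le_rfl hx0.le hx1.le)
  have hi2 : IntervalIntegrable (fun t => g t ^ S) volume x 1 :=
    hint.mono_set (uIcc_sub hx0.le hx1.le le_rfl)
  have hadd : (∫ t in (0:ℝ)..x, g t ^ S) + (∫ t in x..1, g t ^ S)
      = ∫ t in (0:ℝ)..1, g t ^ S := intervalIntegral.integral_add_adjacent_intervals hi1 hi2
  have hBpos : 0 < betaFn (c * S + 1) ((1 - c) * S + 1) :=
    betaFn_pos (by nlinarith) (by nlinarith)
  have hDpos : 0 < ∫ t in (0:ℝ)..1, g t ^ S := by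
    have : betaFn (c * S + 1) ((1 - c) * S + 1) = ∫ t in (0:ℝ)..1, g t ^ S := by
      unfold betaFn
      apply intervalIntegral.integral_congr
      intro t ht
      rw [Set.uIcc_of_le (by norm_num : (0:ℝ) ≤ 1)] at ht
      exact phi_eq_gS S t ht
    linarith
  rw [cdf_eq_ratio hc0 hc1 hS hx0.le hx1.le]
  field_simp
  simp only [hg] at hadd hDpos ⊢; field_simp; linarith [hadd]

end G

/-- When one action's observation count tends to infinity while the other's stays fixed,
the probability that the finitely-sampled Beta(α,β) estimate exceeds the concentrating one
converges to `∫_c^1 f(x;α,β) dx = 1 - I_c(α,β) > 0`. -/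
theorem finite_vs_concentrating (α β c : ℝ) (hα : 0 < α) (hβ : 0 < β)
    (hc0 : 0 < c) (hc1 : c < 1) :
    Tendsto (fun S : ℝ =>
        ∫ x in (0:ℝ)..1, betaPdf α β x * betaCdf (c * S + 1) ((1 - c) * S + 1) x)
      atTop (nhds (∫ x in c..1, betaPdf α β x)) ∧
    (∫ x in c..1, betaPdf α β x) = 1 - betaCdf α β c ∧
    0 < ∫ x in c..1, betaPdf α β x := by
  have hB : 0 < betaFn α β := betaFn_pos hα hβ
  have hphi := phi_integrable hα hβ
  have hphi_c1 : IntervalIntegrable (fun t => t ^ (α-1) * (1-t) ^ (β-1)) volume c 1 :=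
    hphi.mono_set (uIcc_sub hc0.le hc1.le le_rfl)
  have hphi_0c : IntervalIntegrable (fun t => t ^ (α-1) * (1-t) ^ (β-1)) volume 0 c :=
    hphi.mono_set (uIcc_sub le_rfl hc0.le hc1.le)
  have hadd : (∫ t in (0:ℝ)..c, t ^ (α-1) * (1-t) ^ (β-1))
      + (∫ t in c..1, t ^ (α-1) * (1-t) ^ (β-1)) = betaFn α β :=
    intervalIntegral.integral_add_adjacent_intervals hphi_0c hphi_c1
  have hpdf_int : (∫ x in c..1, betaPdf α β x)
      = (∫ t in c..1, t ^ (α-1) * (1-t) ^ (β-1)) / betaFn α β := by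
    unfold betaPdf
    rw [intervalIntegral.integral_div]
  have heq : (∫ x in c..1, betaPdf α β x) = 1 - betaCdf α β c := by
    rw [hpdf_int]
    unfold betaCdf
    field_simp
    linarith
  have hpos : 0 < ∫ x in c..1, betaPdf α β x := by
    apply intervalIntegral.intervalIntegral_pos_of_pos_on _ _ hc1
    · exact hphi_c1.div_const _
    · intro x hx
      have h1 := Real.rpow_pos_of_pos (hc0.trans hx.1) (α-1)
      have h2 := Real.rpow_pos_of_pos (by linarith [hx.2] : (0:ℝ) < 1 - x) (β-1)
      unfold betaPdf
      positivity
  refine ⟨?_, heq, hpos⟩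
  -- now the convergence, via dominated convergence on Ioc 0 1
  have hpdf_meas : Measurable (betaPdf α β) := by
    unfold betaPdf
    exact ((measurable_id.pow_const _).mul
      ((measurable_const.sub measurable_id).pow_const _)).div_const _
  have hconv : Tendsto (fun S : ℝ =>
      ∫ x in Ioc (0:ℝ) 1, betaPdf α β x * betaCdf (c*S+1) ((1-c)*S+1) x)
      atTop (nhds (∫ x in Ioc (0:ℝ) 1, (Ioi c).indicator (betaPdf α β) x)) := by
    apply tendsto_integral_filter_of_dominated_convergence (betaPdf α β)
    · filter_upwards [eventually_ge_atTop (0:ℝ)] with S hS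
      have ha : (0:ℝ) < c*S+1 := by nlinarith
      have hb : (0:ℝ) < (1-c)*S+1 := by nlinarith
      have hcont : ContinuousOn (betaCdf (c*S+1) ((1-c)*S+1)) (Icc 0 1) := by
        unfold betaCdf
        apply ContinuousOn.div_const
        have hio : IntegrableOn (fun t : ℝ => t^(c*S+1-1)*(1-t)^((1-c)*S+1-1))
            (Set.uIcc (0:ℝ) 1) volume := by
          rw [Set.uIcc_of_le (by norm_num : (0:ℝ) ≤ 1),
            integrableOn_Icc_iff_integrableOn_Ioc]
          exact ((intervalIntegrable_iff_integrableOn_Ioc_of_le (by norm_num)).mp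
            (phi_integrable ha hb))
        have := intervalIntegral.continuousOn_primitive_interval (μ := volume) hio
        rwa [Set.uIcc_of_le (by norm_num : (0:ℝ) ≤ 1)] at this
      exact (hpdf_meas.aestronglyMeasurable).mul
        ((hcont.mono Ioc_subset_Icc_self).aestronglyMeasurable measurableSet_Ioc)
    · filter_upwards [eventually_ge_atTop (0:ℝ)] with S hS
      rw [ae_restrict_iff' measurableSet_Ioc]
      filter_upwards with x hx
      have ha : (0:ℝ) < c*S+1 := by nlinarith
      have hb : (0:ℝ) < (1-c)*S+1 := by nlinarith
      have hBS : 0 < betaFn (c*S+1) ((1-c)*S+1) := betaFn_pos ha hb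
      have hpdf0 : 0 ≤ betaPdf α β x := by
        unfold betaPdf
        apply div_nonneg _ hB.le
        exact mul_nonneg (Real.rpow_nonneg hx.1.le _)
          (Real.rpow_nonneg (by linarith [hx.2]) _)
      have hphiS := phi_integrable ha hb
      have hnn : 0 ≤ᵐ[volume.restrict (Ioc (0:ℝ) 1)]
          fun t : ℝ => t^(c*S+1-1)*(1-t)^((1-c)*S+1-1) := by
        rw [Filter.EventuallyLE, ae_restrict_iff' measurableSet_Ioc]
        filter_upwards with t ht
        exact mul_nonneg (Real.rpow_nonneg ht.1.le _)
          (Real.rpow_nonneg (by linarith [ht.2]) _)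
      have hcdf0 : 0 ≤ betaCdf (c*S+1) ((1-c)*S+1) x := by
        unfold betaCdf
        apply div_nonneg _ hBS.le
        apply intervalIntegral.integral_nonneg hx.1.le
        intro t ht
        exact mul_nonneg (Real.rpow_nonneg ht.1 _)
          (Real.rpow_nonneg (by linarith [ht.2, hx.2]) _)
      have hcdf1 : betaCdf (c*S+1) ((1-c)*S+1) x ≤ 1 := by
        unfold betaCdf
        rw [div_le_one hBS]
        exact intervalIntegral.integral_mono_interval le_rfl hx.1.le hx.2 hnn hphiS
      rw [Real.norm_eq_abs, abs_of_nonneg (mul_nonneg hpdf0 hcdf0)]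
      calc betaPdf α β x * betaCdf (c*S+1) ((1-c)*S+1) x
          ≤ betaPdf α β x * 1 := mul_le_mul_of_nonneg_left hcdf1 hpdf0
        _ = betaPdf α β x := mul_one _
    · have : IntervalIntegrable (betaPdf α β) volume 0 1 := by
        unfold betaPdf
        exact hphi.div_const _
      exact (intervalIntegrable_iff_integrableOn_Ioc_of_le (by norm_num)).mp this
    · have hmz : (volume : Measure ℝ) ({c, 1} : Set ℝ) = 0 :=
        (Set.toFinite ({c, 1} : Set ℝ)).measure_zero volume
      have hae : ∀ᵐ x : ℝ ∂volume.restrict (Ioc (0:ℝ) 1), x ∉ ({c, 1} : Set ℝ) :=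
        ae_restrict_of_ae (measure_eq_zero_iff_ae_notMem.mp hmz)
      filter_upwards [ae_restrict_mem measurableSet_Ioc, hae] with x hx hxc
      simp only [Set.mem_insert_iff, Set.mem_singleton_iff, not_or] at hxc
      rcases lt_trichotomy x c with hlt | hceq | hgt
      · have hlim := cdf_tendsto_lt hc0 hc1 hx.1 hlt
        have hind : (Ioi c).indicator (betaPdf α β) x = 0 :=
          Set.indicator_of_notMem (by simp only [Set.mem_Ioi, not_lt]; exact hlt.le) _
        rw [hind]
        have h2 := (tendsto_const_nhds (x := betaPdf α β x)).mul hlim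
        rw [mul_zero] at h2
        exact h2
      · exact absurd hceq hxc.1
      · have hx1 : x < 1 := lt_of_le_of_ne hx.2 hxc.2
        have hlim := cdf_tendsto_gt hc0 hc1 hgt hx1
        have hind : (Ioi c).indicator (betaPdf α β) x = betaPdf α β x :=
          Set.indicator_of_mem hgt _
        rw [hind]
        have h2 := (tendsto_const_nhds (x := betaPdf α β x)).mul hlim
        rw [mul_one] at h2
        exact h2
  have he1 : (fun S : ℝ => ∫ x in (0:ℝ)..1,
      betaPdf α β x * betaCdf (c*S+1) ((1-c)*S+1) x)
      = fun S : ℝ => ∫ x in Ioc (0:ℝ) 1,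
        betaPdf α β x * betaCdf (c*S+1) ((1-c)*S+1) x :=
    funext fun S => intervalIntegral.integral_of_le (by norm_num)
  have he2 : (∫ x in c..1, betaPdf α β x)
      = ∫ x in Ioc (0:ℝ) 1, (Ioi c).indicator (betaPdf α β) x := by
    have hset : Ioc (0:ℝ) 1 ∩ Ioi c = Ioc c 1 := by
      ext y
      simp only [Set.mem_inter_iff, Set.mem_Ioc, Set.mem_Ioi]
      constructor
      · rintro ⟨⟨_, hy2⟩, hy3⟩
        exact ⟨hy3, hy2⟩
      · rintro ⟨hy1, hy2⟩
        exact ⟨⟨hc0.trans hy1, hy2⟩, hy1⟩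
    rw [intervalIntegral.integral_of_le hc1.le,
      setIntegral_indicator measurableSet_Ioi, hset]
  rw [he1, he2]
  exact hconv
end

section
/- Let α_1, β_1, α_2, β_2 be positive integers. Then the probability that an independent Beta(α_1,β_1) sample exceeds an independent Beta(α_2,β_2) sample satisfies ∫_0^1 f(x; α_1, β_1) I_x(α_2, β_2) dx = Σ_{i=0}^{α_1−1} B(α_2+i, β_1+β_2) / ( (β_1+i) · B(1+i, β_1) · B(α_2, β_2) ). -/
open MeasureTheory Real Set
open intervalIntegral

/-- `g(α₁,β₁,α₂,β₂)`: the probability that an independent Beta(α₁,β₁) sample exceeds an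
independent Beta(α₂,β₂) sample. -/
noncomputable def probG (a₁ b₁ a₂ b₂ : ℝ) : ℝ :=
  ∫ x in (0:ℝ)..1, betaPdf a₁ b₁ x * betaCdf a₂ b₂ x

/-- `h(α₁,β₁,α₂,β₂) = B(α₁+α₂,β₁+β₂)/(B(α₁,β₁) B(α₂,β₂))`. -/
noncomputable def probH (a₁ b₁ a₂ b₂ : ℝ) : ℝ :=
  betaFn (a₁ + a₂) (b₁ + b₂) / (betaFn a₁ b₁ * betaFn a₂ b₂)


namespace BetaAux

/-- `∫₀¹ x^m (1-x)^n dx` with natural exponents. -/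
noncomputable def J (m n : ℕ) : ℝ := ∫ x in (0:ℝ)..1, x ^ m * (1 - x) ^ n

/-- Antiderivative `∫₀ˣ t^p (1-t)^q dt`. -/
noncomputable def K (p q : ℕ) (x : ℝ) : ℝ := ∫ t in (0:ℝ)..x, t ^ p * (1 - t) ^ q

noncomputable def GG (m n p q : ℕ) : ℝ :=
  ∫ x in (0:ℝ)..1, x ^ m * (1 - x) ^ n * K p q x

lemma cont_pn (m n : ℕ) : Continuous fun x : ℝ => x ^ m * (1 - x) ^ n := by
  fun_prop

lemma hasDerivK (p q : ℕ) (x : ℝ) : HasDerivAt (K p q) (x ^ p * (1 - x) ^ q) x :=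
  ((cont_pn p q).integral_hasStrictDerivAt 0 x).hasDerivAt

lemma contK (p q : ℕ) : Continuous (K p q) :=
  continuous_iff_continuousAt.2 fun x => (hasDerivK p q x).continuousAt

lemma K_zero (p q : ℕ) : K p q 0 = 0 := by simp [K]

lemma hasDerivU (m n : ℕ) (x : ℝ) :
    HasDerivAt (fun x : ℝ => x ^ m * (1 - x) ^ n)
      ((m : ℝ) * x ^ (m - 1) * (1 - x) ^ n - (n : ℝ) * x ^ m * (1 - x) ^ (n - 1)) x := by
  have h1 : HasDerivAt (fun x : ℝ => x ^ m) ((m : ℝ) * x ^ (m - 1)) x := hasDerivAt_pow m x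
  have h0 : HasDerivAt (fun x : ℝ => 1 - x) (-1) x := by
    simpa using (hasDerivAt_id x).const_sub 1
  have h2 : HasDerivAt (fun x : ℝ => (1 - x) ^ n)
      (((n : ℝ) * (1 - x) ^ (n - 1)) * (-1)) x :=
    (hasDerivAt_pow n (1 - x)).comp x h0
  have := h1.mul h2
  exact this.congr_deriv (by ring)

lemma J_pos (m n : ℕ) : 0 < J m n := by
  apply intervalIntegral_pos_of_pos_on ((cont_pn m n).intervalIntegrable 0 1)
  · intro x hx
    exact mul_pos (pow_pos hx.1 _) (pow_pos (by linarith [hx.2]) _)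
  · norm_num

/-- Integration by parts identity. -/
lemma parts (m n p q : ℕ) :
    (m : ℝ) * GG (m - 1) (n + 1) p q - ((n : ℝ) + 1) * GG m n p q
      = - J (m + p) (n + q + 1) := by
  have hu : ∀ x ∈ uIcc (0:ℝ) 1, HasDerivAt (fun x : ℝ => x ^ m * (1 - x) ^ (n + 1))
      ((m : ℝ) * x ^ (m - 1) * (1 - x) ^ (n + 1) - ((n : ℝ) + 1) * x ^ m * (1 - x) ^ n) x := by
    intro x _
    have := hasDerivU m (n + 1) x
    simpa using this
  have hv : ∀ x ∈ uIcc (0:ℝ) 1, HasDerivAt (K p q) (x ^ p * (1 - x) ^ q) x :=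
    fun x _ => hasDerivK p q x
  have hu' : IntervalIntegrable
      (fun x : ℝ => (m : ℝ) * x ^ (m - 1) * (1 - x) ^ (n + 1) - ((n : ℝ) + 1) * x ^ m * (1 - x) ^ n)
      volume 0 1 := (Continuous.intervalIntegrable (by fun_prop) 0 1)
  have hv' : IntervalIntegrable (fun x : ℝ => x ^ p * (1 - x) ^ q) volume 0 1 :=
    (cont_pn p q).intervalIntegrable 0 1
  have H := integral_mul_deriv_eq_deriv_mul hu hv hu' hv'
  have hL : (∫ x in (0:ℝ)..1, (x ^ m * (1 - x) ^ (n + 1)) * (x ^ p * (1 - x) ^ q))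
      = J (m + p) (n + q + 1) := by
    unfold J
    apply integral_congr
    intro x _
    ring
  have hR : (∫ x in (0:ℝ)..1,
      ((m : ℝ) * x ^ (m - 1) * (1 - x) ^ (n + 1) - ((n : ℝ) + 1) * x ^ m * (1 - x) ^ n) * K p q x)
      = (m : ℝ) * GG (m - 1) (n + 1) p q - ((n : ℝ) + 1) * GG m n p q := by
    unfold GG
    rw [← intervalIntegral.integral_const_mul, ← intervalIntegral.integral_const_mul, ← intervalIntegral.integral_sub]
    · apply integral_congr; intro x _; ring
    · exact Continuous.intervalIntegrable
        ((continuous_const.mul ((cont_pn (m-1) (n+1)).mul (contK p q)))) 0 1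
    · exact Continuous.intervalIntegrable
        ((continuous_const.mul ((cont_pn m n).mul (contK p q)))) 0 1
  rw [hL, hR, K_zero] at H
  simp at H
  linarith [H]

end BetaAux

namespace BetaAux

lemma J_split (m n : ℕ) :
    (∫ x in (0:ℝ)..1, x ^ m * (1 - x) ^ (n + 1)) = J m n - J (m + 1) n := by
  unfold J
  rw [← intervalIntegral.integral_sub ((cont_pn m n).intervalIntegrable 0 1)
      ((cont_pn (m+1) n).intervalIntegrable 0 1)]
  apply integral_congr
  intro x _
  ring

lemma J_rec (m n : ℕ) :
    ((m : ℝ) + n + 2) * J (m + 1) n = ((m : ℝ) + 1) * J m n := by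
  have h : (∫ x in (0:ℝ)..1,
      (((m:ℝ)+1) * x ^ m * (1 - x) ^ (n + 1) - ((n:ℝ)+1) * x ^ (m+1) * (1 - x) ^ n)) = 0 := by
    rw [integral_eq_sub_of_hasDerivAt (f := fun x : ℝ => x ^ (m+1) * (1 - x) ^ (n+1))
      (fun x _ => by simpa using hasDerivU (m+1) (n+1) x)
      (Continuous.intervalIntegrable (by fun_prop) 0 1)]
    norm_num
  have h2 : (∫ x in (0:ℝ)..1,
      (((m:ℝ)+1) * x ^ m * (1 - x) ^ (n + 1) - ((n:ℝ)+1) * x ^ (m+1) * (1 - x) ^ n))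
      = ((m:ℝ)+1) * (J m n - J (m+1) n) - ((n:ℝ)+1) * J (m+1) n := by
    rw [← J_split]
    unfold J
    rw [← intervalIntegral.integral_const_mul, ← intervalIntegral.integral_const_mul, ← intervalIntegral.integral_sub]
    · apply integral_congr; intro x _; ring
    · exact Continuous.intervalIntegrable (by fun_prop) 0 1
    · exact Continuous.intervalIntegrable (by fun_prop) 0 1
  rw [h2] at h
  linarith

lemma GG_split (m n p q : ℕ) :
    GG m (n + 1) p q = GG m n p q - GG (m + 1) n p q := by
  unfold GG
  rw [← intervalIntegral.integral_sub
      (Continuous.intervalIntegrable (u := fun x => x ^ m * (1 - x) ^ n * K p q x)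
        ((cont_pn m n).mul (contK p q)) 0 1)
      (Continuous.intervalIntegrable (u := fun x => x ^ (m+1) * (1 - x) ^ n * K p q x)
        ((cont_pn (m+1) n).mul (contK p q)) 0 1)]
  apply integral_congr
  intro x _
  ring

lemma GG_zero (n p q : ℕ) : GG 0 n p q = J p (n + q + 1) / ((n : ℝ) + 1) := by
  have h := parts 0 n p q
  simp only [Nat.cast_zero, zero_mul, zero_sub, zero_add] at h
  have hn : ((n:ℝ) + 1) ≠ 0 := by positivity
  field_simp
  linarith

lemma GG_succ (m n p q : ℕ) :
    ((m : ℝ) + n + 2) * GG (m + 1) n p q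
      = ((m : ℝ) + 1) * GG m n p q + J (m + 1 + p) (n + q + 1) := by
  have h := parts (m + 1) n p q
  rw [show m + 1 - 1 = m from rfl, GG_split m n p q] at h
  push_cast at h
  linarith

end BetaAux

namespace BetaAux

lemma key (m n p q : ℕ) :
    GG m n p q / (J m n * J p q) =
      ∑ i ∈ Finset.range (m + 1),
        J (p + i) (n + q + 1) / (((n : ℝ) + 1 + i) * J i n * J p q) := by
  induction m with
  | zero =>
      rw [Finset.sum_range_one, GG_zero]
      simp only [Nat.cast_zero, add_zero]
      rw [div_div, mul_assoc]
  | succ m ih =>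
      rw [Finset.sum_range_succ, ← ih]
      have hrec := J_rec m n
      have hGG := GG_succ m n p q
      rw [show m + 1 + p = p + (m + 1) from by omega] at hGG
      have h1 := (J_pos m n).ne'
      have h2 := (J_pos (m+1) n).ne'
      have h3 := (J_pos p q).ne'
      have hm2 : ((m:ℝ) + n + 2) ≠ 0 := by positivity
      have key2 : ((m:ℝ)+n+2) * J m n * GG (m+1) n p q
          = ((m:ℝ)+n+2) * J (m+1) n * GG m n p q + J m n * J (p + (m+1)) (n+q+1) := by
        linear_combination J m n * hGG - GG m n p q * hrec
      push_cast
      rw [show ((n:ℝ) + 1 + ((m:ℝ) + 1)) = (m:ℝ) + n + 2 by ring]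
      field_simp
      linear_combination key2

end BetaAux


namespace BetaAux

lemma betaFn_eq (a b : ℕ) (ha : 1 ≤ a) (hb : 1 ≤ b) :
    betaFn (a : ℝ) (b : ℝ) = J (a - 1) (b - 1) := by
  unfold betaFn J
  apply integral_congr
  intro t _
  rw [show (a:ℝ) - 1 = ((a - 1 : ℕ) : ℝ) by rw [Nat.cast_sub ha]; norm_num,
      show (b:ℝ) - 1 = ((b - 1 : ℕ) : ℝ) by rw [Nat.cast_sub hb]; norm_num]
  simp only [rpow_natCast]

lemma betaCdf_eq (a b : ℕ) (ha : 1 ≤ a) (hb : 1 ≤ b) (x : ℝ) :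
    betaCdf (a : ℝ) (b : ℝ) x = K (a - 1) (b - 1) x / J (a - 1) (b - 1) := by
  unfold betaCdf K
  rw [betaFn_eq a b ha hb]
  congr 1
  apply integral_congr
  intro t _
  rw [show (a:ℝ) - 1 = ((a - 1 : ℕ) : ℝ) by rw [Nat.cast_sub ha]; norm_num,
      show (b:ℝ) - 1 = ((b - 1 : ℕ) : ℝ) by rw [Nat.cast_sub hb]; norm_num]
  simp only [rpow_natCast]

lemma probG_eq (a₁ b₁ a₂ b₂ : ℕ) (h1 : 1 ≤ a₁) (h2 : 1 ≤ b₁) (h3 : 1 ≤ a₂) (h4 : 1 ≤ b₂) :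
    probG (a₁ : ℝ) (b₁ : ℝ) (a₂ : ℝ) (b₂ : ℝ)
      = GG (a₁-1) (b₁-1) (a₂-1) (b₂-1) / (J (a₁-1) (b₁-1) * J (a₂-1) (b₂-1)) := by
  unfold probG GG
  rw [← intervalIntegral.integral_div]
  apply integral_congr
  intro x _
  beta_reduce
  unfold betaPdf
  rw [betaFn_eq a₁ b₁ h1 h2, betaCdf_eq a₂ b₂ h3 h4 x,
      show (a₁:ℝ) - 1 = ((a₁ - 1 : ℕ) : ℝ) by rw [Nat.cast_sub h1]; norm_num,
      show (b₁:ℝ) - 1 = ((b₁ - 1 : ℕ) : ℝ) by rw [Nat.cast_sub h2]; norm_num]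
  simp only [rpow_natCast]
  ring

end BetaAux

/-- Closed-form series for the probability that a Beta(α₁,β₁) sample exceeds a
Beta(α₂,β₂) sample, for positive integer parameters (sum over `i < α₁`). -/
theorem probG_sum_formula_alpha (a₁ b₁ a₂ b₂ : ℕ)
    (hα₁ : 0 < a₁) (hβ₁ : 0 < b₁) (hα₂ : 0 < a₂) (hβ₂ : 0 < b₂) :
    probG (a₁ : ℝ) (b₁ : ℝ) (a₂ : ℝ) (b₂ : ℝ) =
      ∑ i ∈ Finset.range a₁,
        betaFn ((a₂ : ℝ) + i) ((b₁ : ℝ) + b₂) /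
          (((b₁ : ℝ) + i) * betaFn (1 + (i : ℝ)) (b₁ : ℝ) * betaFn (a₂ : ℝ) (b₂ : ℝ)) := by
  obtain ⟨m, rfl⟩ : ∃ m, a₁ = m + 1 := ⟨a₁ - 1, by omega⟩
  obtain ⟨n, rfl⟩ : ∃ n, b₁ = n + 1 := ⟨b₁ - 1, by omega⟩
  obtain ⟨p, rfl⟩ : ∃ p, a₂ = p + 1 := ⟨a₂ - 1, by omega⟩
  obtain ⟨q, rfl⟩ : ∃ q, b₂ = q + 1 := ⟨b₂ - 1, by omega⟩
  rw [BetaAux.probG_eq (m+1) (n+1) (p+1) (q+1) (by omega) (by omega) (by omega) (by omega)]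
  simp only [Nat.add_sub_cancel]
  rw [BetaAux.key]
  apply Finset.sum_congr rfl
  intro i hi
  have e1 : ((p+1:ℕ):ℝ) + (i:ℝ) = ((p+1+i : ℕ):ℝ) := by push_cast; ring
  have e2 : ((n+1:ℕ):ℝ) + ((q+1:ℕ):ℝ) = ((n+q+2 : ℕ):ℝ) := by push_cast; ring
  have e3 : (1:ℝ) + (i:ℝ) = ((1+i : ℕ):ℝ) := by push_cast; ring
  rw [e1, e2, e3, BetaAux.betaFn_eq (p+1+i) (n+q+2) (by omega) (by omega),
      BetaAux.betaFn_eq (1+i) (n+1) (by omega) (by omega),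
      BetaAux.betaFn_eq (p+1) (q+1) (by omega) (by omega)]
  have e4 : p + 1 + i - 1 = p + i := by omega
  have e5 : n + q + 2 - 1 = n + q + 1 := by omega
  have e6 : 1 + i - 1 = i := by omega
  have e7 : ((n+1:ℕ):ℝ) + (i:ℝ) = (n:ℝ) + 1 + i := by push_cast; ring
  rw [e4, e5, e6, e7]
  simp [Nat.add_sub_cancel]
end

section
/- Let α_1, β_1, α_2, β_2 be positive integers. Then the probability that an independent Beta(α_1,β_1) sample exceeds an independent Beta(α_2,β_2) sample satisfies ∫_0^1 f(x; α_1, β_1) I_x(α_2, β_2) dx = Σ_{i=0}^{β_2−1} B(β_1+i, α_1+α_2) / ( (α_2+i) · B(1+i, α_2) · B(α_1, β_1) ). -/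
open MeasureTheory Real Set

noncomputable def Gm (m n : ℕ) (x : ℝ) : ℝ := ∫ t in (0:ℝ)..x, t ^ m * (1 - t) ^ n

lemma Gm_rec (m n : ℕ) (x : ℝ) :
    x ^ (m+1) * (1 - x) ^ (n+1) =
      ((m:ℝ)+n+2) * Gm m (n+1) x - ((n:ℝ)+1) * Gm m n x := by
  have key : ∀ t : ℝ, HasDerivAt (fun t : ℝ => t ^ (m+1) * (1 - t) ^ (n+1))
      (((m:ℝ)+n+2) * (t ^ m * (1 - t) ^ (n+1)) - ((n:ℝ)+1) * (t ^ m * (1 - t) ^ n)) t := by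
    intro t
    have h1 : HasDerivAt (fun t : ℝ => 1 - t) (-1) t := (hasDerivAt_id t).const_sub 1
    have h2 := h1.fun_pow (n+1)
    have h3 := (hasDerivAt_pow (m+1) t).fun_mul h2
    refine h3.congr_deriv ?_
    simp only [Nat.add_sub_cancel]
    push_cast
    ring
  have hint : IntervalIntegrable (fun t : ℝ =>
      ((m:ℝ)+n+2) * (t ^ m * (1 - t) ^ (n+1)) - ((n:ℝ)+1) * (t ^ m * (1 - t) ^ n))
      volume 0 x := (by fun_prop : Continuous _).intervalIntegrable _ _
  have := intervalIntegral.integral_eq_sub_of_hasDerivAt (fun t _ => key t) hint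
  rw [intervalIntegral.integral_sub ((by fun_prop : Continuous _).intervalIntegrable _ _)
      ((by fun_prop : Continuous _).intervalIntegrable _ _),
    intervalIntegral.integral_const_mul, intervalIntegral.integral_const_mul] at this
  simpa [Gm] using this.symm

lemma Gm_series (m n : ℕ) (x : ℝ) :
    Gm m n x = ((m.factorial : ℝ) * n.factorial / (m+n+1).factorial) *
      ∑ i ∈ Finset.range (n+1), ((m+i).choose i : ℝ) * (x ^ (m+1) * (1-x) ^ i) := by
  induction n with
  | zero =>
    simp [Gm, integral_pow, Nat.factorial_succ]
    field_simp
  | succ n ih =>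
    have hrec := Gm_rec m n x
    have hne : ((m:ℝ)+n+2) ≠ 0 := by positivity
    have hG : Gm m (n+1) x = (x ^ (m+1) * (1-x)^(n+1) + ((n:ℝ)+1) * Gm m n x) / ((m:ℝ)+n+2) := by
      field_simp
      linarith [hrec]
    rw [hG, Finset.sum_range_succ, ih]
    have hC : (((m+n+1).choose (n+1) : ℕ) : ℝ) * (((n:ℝ)+1) * n.factorial) * m.factorial
        = ((m+n+1).factorial : ℝ) := by
      have h := Nat.choose_mul_factorial_mul_factorial (n := m+n+1) (k := n+1) (by omega)
      have h2 : m+n+1 - (n+1) = m := by omega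
      rw [h2, Nat.factorial_succ] at h
      exact_mod_cast congrArg (Nat.cast (R := ℝ)) h
    have hfm : (m.factorial : ℝ) ≠ 0 := by positivity
    have hfn : (n.factorial : ℝ) ≠ 0 := by positivity
    have hf3 : ((m+n+1).factorial : ℝ) ≠ 0 := by positivity
    rw [show m+(n+1) = m+n+1 from by omega,
      Nat.factorial_succ (m+n+1), Nat.factorial_succ n]
    push_cast
    set S := ∑ i ∈ Finset.range (n+1), ((m+i).choose i : ℝ) * (x ^ (m+1) * (1-x) ^ i) with hS
    set T := x ^ (m+1) * (1-x)^(n+1) with hT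
    set C := (((m+n+1).choose (n+1) : ℕ) : ℝ) with hCv
    set F1 := (m.factorial : ℝ) with hF1
    set F2 := (n.factorial : ℝ) with hF2
    set F3 := ((m+n+1).factorial : ℝ) with hF3
    have e3 : F1 * (((n:ℝ)+1) * F2) / (((m:ℝ) + (n:ℝ) + 1 + 1) * F3)
        = ((n:ℝ)+1) * (F1 * F2 / F3) / ((m:ℝ)+(n:ℝ)+2) := by
      rw [div_eq_div_iff (by positivity) hne]
      field_simp
      ring
    have e2 : ((n:ℝ)+1) * (F1 * F2 / F3) / ((m:ℝ)+(n:ℝ)+2) * C = 1/((m:ℝ)+(n:ℝ)+2) := by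
      rw [div_mul_eq_mul_div, div_eq_div_iff hne hne, one_mul]
      field_simp
      linear_combination hC
    rw [mul_add, e3]
    linear_combination (-T) * e2

lemma Gm_one (m n : ℕ) :
    Gm m n 1 = ((m.factorial : ℝ) * n.factorial / (m+n+1).factorial) := by
  rw [Gm_series]
  have h : ∑ i ∈ Finset.range (n+1), ((m+i).choose i : ℝ) * ((1:ℝ) ^ (m+1) * (1-1) ^ i)
      = 1 := by
    rw [Finset.sum_eq_single 0]
    · simp
    · intro i _ hi
      simp [zero_pow hi]
    · simp
  rw [h, mul_one]

lemma betaFn_nat (m n : ℕ) :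
    betaFn ((m:ℝ)+1) ((n:ℝ)+1) = (m.factorial : ℝ) * n.factorial / (m+n+1).factorial := by
  rw [← Gm_one m n]
  unfold betaFn Gm
  simp only [add_sub_cancel_right, Real.rpow_natCast]

lemma betaFn_nat_pos (m n : ℕ) : 0 < betaFn ((m:ℝ)+1) ((n:ℝ)+1) := by
  rw [betaFn_nat]; positivity

lemma integrand_eq (A B C D : ℕ) (x : ℝ) :
    betaPdf ((A:ℝ)+1) ((B:ℝ)+1) x * betaCdf ((C:ℝ)+1) ((D:ℝ)+1) x
      = ∑ i ∈ Finset.range (D+1),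
          (((C+i).choose i : ℝ) / betaFn ((A:ℝ)+1) ((B:ℝ)+1)) *
            (x ^ (A+C+1) * (1-x) ^ (B+i)) := by
  unfold betaPdf betaCdf
  simp only [add_sub_cancel_right, Real.rpow_natCast]
  have hGm : (∫ t in (0:ℝ)..x, t ^ C * (1-t) ^ D) = Gm C D x := rfl
  rw [hGm, Gm_series C D x, betaFn_nat C D,
    mul_div_cancel_left₀ _ (by positivity : ((C.factorial : ℝ) * D.factorial / (C+D+1).factorial) ≠ 0),
    Finset.mul_sum]
  refine Finset.sum_congr rfl fun i _ => ?_
  rw [show A+C+1 = A+(C+1) from by omega]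
  simp only [pow_add]
  ring

/-- Closed-form series for the probability that a Beta(α₁,β₁) sample exceeds a
Beta(α₂,β₂) sample, for positive integer parameters (sum over `i < β₂`). -/
theorem probG_sum_formula_beta (a₁ b₁ a₂ b₂ : ℕ)
    (hα₁ : 0 < a₁) (hβ₁ : 0 < b₁) (hα₂ : 0 < a₂) (hβ₂ : 0 < b₂) :
    probG (a₁ : ℝ) (b₁ : ℝ) (a₂ : ℝ) (b₂ : ℝ) =
      ∑ i ∈ Finset.range b₂,
        betaFn ((b₁ : ℝ) + i) ((a₁ : ℝ) + a₂) /
          (((a₂ : ℝ) + i) * betaFn (1 + (i : ℝ)) (a₂ : ℝ) * betaFn (a₁ : ℝ) (b₁ : ℝ)) := by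
  obtain ⟨A, rfl⟩ : ∃ A, a₁ = A + 1 := ⟨a₁ - 1, by omega⟩
  obtain ⟨B, rfl⟩ : ∃ B, b₁ = B + 1 := ⟨b₁ - 1, by omega⟩
  obtain ⟨C, rfl⟩ : ∃ C, a₂ = C + 1 := ⟨a₂ - 1, by omega⟩
  obtain ⟨D, rfl⟩ : ∃ D, b₂ = D + 1 := ⟨b₂ - 1, by omega⟩
  push_cast
  unfold probG
  rw [intervalIntegral.integral_congr (g := fun x => ∑ i ∈ Finset.range (D+1),
      (((C+i).choose i : ℝ) / betaFn ((A:ℝ)+1) ((B:ℝ)+1)) * (x ^ (A+C+1) * (1-x) ^ (B+i)))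
      (fun x _ => integrand_eq A B C D x),
    intervalIntegral.integral_finset_sum
      (fun i _ => ((by fun_prop : Continuous (fun x : ℝ =>
        (((C+i).choose i : ℝ) / betaFn ((A:ℝ)+1) ((B:ℝ)+1)) *
          (x ^ (A+C+1) * (1-x) ^ (B+i)))).intervalIntegrable 0 1))]
  refine Finset.sum_congr rfl fun i _ => ?_
  rw [intervalIntegral.integral_const_mul]
  have hGm : (∫ x in (0:ℝ)..1, x ^ (A+C+1) * (1-x) ^ (B+i)) = Gm (A+C+1) (B+i) 1 := rfl
  rw [hGm, Gm_one]
  have hβ : betaFn ((A:ℝ)+1) ((B:ℝ)+1) ≠ 0 := (betaFn_nat_pos A B).ne'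
  have hchoose : (((C+i).choose i : ℕ) : ℝ) * i.factorial * C.factorial
      = ((C+i).factorial : ℝ) := by
    have h := Nat.choose_mul_factorial_mul_factorial (n := C+i) (k := i) (by omega)
    rw [show C+i-i = C from by omega] at h
    exact_mod_cast congrArg (Nat.cast (R := ℝ)) h
  rw [show (B:ℝ)+1+(i:ℝ) = ((B+i:ℕ):ℝ)+1 from by push_cast; ring,
    show (A:ℝ)+1+((C:ℝ)+1) = ((A+C+1:ℕ):ℝ)+1 from by push_cast; ring,
    show (1:ℝ)+(i:ℝ) = ((i:ℕ):ℝ)+1 from by ring,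
    betaFn_nat (B+i) (A+C+1), betaFn_nat i C,
    show (B+i)+(A+C+1)+1 = (A+C+1)+(B+i)+1 from by omega,
    show i+C+1 = (C+i)+1 from by omega,
    Nat.factorial_succ (C+i)]
  have hf1 : ((A+C+1+(B+i)+1).factorial : ℝ) ≠ 0 := by positivity
  have hf2 : ((C+i).factorial : ℝ) ≠ 0 := by positivity
  have hf3 : (i.factorial : ℝ) ≠ 0 := by positivity
  have hf4 : (C.factorial : ℝ) ≠ 0 := by positivity
  have hne : ((C:ℝ)+1+i) ≠ 0 := by positivity
  push_cast
  field_simp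
  linear_combination ((C:ℝ)+i+1) * hchoose
end
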